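/- Let D be an integral domain with quotient field K, A a finitely generated torsion-free D-algebra, B = A ⊗_D K, with A ∩ K = D under the canonical embeddings into B, and let S ⊆ A. Then S is a right ringset if and only if, for every nonzero d ∈ D, the image S + dA = {s + dA : s ∈ S}, as a subset of the quotient ring A/dA, is a right null-ideal set, i.e., N^r_{A/dA}(S + dA) = {g ∈ (A/dA)[x] : g_r(σ) = 0 for all σ ∈ S + dA} is a right ideal of (A/dA)[x]. -/
import Mathlib


open Polynomial TensorProduct

/-- The set `Int^r_B(S,A)` of right integer-valued polynomials on `S ⊆ A`, where
`B = A ⊗_D K` and `A` is embedded in `B` via `a ↦ a ⊗ 1`.  Right evaluation is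
Mathlib's `Polynomial.eval`. -/
def IntRight (D K A : Type*) [CommRing D] [Field K] [Algebra D K]
    [Ring A] [Algebra D A] (S : Set A) : Set (A ⊗[D] K)[X] :=
  {F : (A ⊗[D] K)[X] | ∀ s ∈ S,
    F.eval (Algebra.TensorProduct.includeLeftRingHom (R := D) (B := K) s) ∈
      Set.range (Algebra.TensorProduct.includeLeftRingHom (R := D) (A := A) (B := K))}

/-- A subset `N` of a (possibly noncommutative) ring is a right ideal:
an additive subgroup closed under multiplication from the right. -/
def IsRightIdealSet {R : Type*} [Ring R] (N : Set R) : Prop :=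
  0 ∈ N ∧ (∀ a ∈ N, ∀ b ∈ N, a + b ∈ N) ∧ (∀ a ∈ N, -a ∈ N) ∧
    ∀ g : R, ∀ a ∈ N, a * g ∈ N

/-- The two-sided ideal `dA` of `A`. -/
def dIdeal (D A : Type*) [CommRing D] [Ring A] [Algebra D A] (d : D) : TwoSidedIdeal A :=
  TwoSidedIdeal.span (Set.range fun a : A => d • a)

/-! ### Auxiliary lemmas -/

section PolyAux

variable {R S M : Type*}

/-- Key noncommutative evaluation identity: `(p*q)(s) = (p * C (q(s)))(s)`. -/
theorem eval_mul_eq_eval_mul_C [Semiring R] (q : R[X]) (s : R) (p : R[X]) :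
    (p * q).eval s = (p * C (q.eval s)).eval s := by
  induction p using Polynomial.induction_on' with
  | add p₁ p₂ h₁ h₂ => simp only [add_mul, eval_add, h₁, h₂]
  | monomial n b =>
    rw [← C_mul_X_pow_eq_monomial, mul_assoc, X_pow_mul, mul_assoc, X_pow_mul,
      eval_C_mul, eval_C_mul, eval_mul_X_pow, eval_mul_X_pow, eval_C]

theorem eval_map_ringHom [Semiring R] [Semiring S] (φ : R →+* S) (p : R[X]) (s : R) :
    (p.map φ).eval (φ s) = φ (p.eval s) := by
  rw [eval_map, eval₂_at_apply]

theorem map_smul_poly [Semiring R] [Semiring S] [SMulZeroClass M R] [SMulZeroClass M S]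
    (φ : R →+* S) (m : M) (h : ∀ a, φ (m • a) = m • φ a) (f : R[X]) :
    (m • f).map φ = m • f.map φ := by
  ext n
  simp only [Polynomial.coeff_map, Polynomial.coeff_smul, h]

end PolyAux

section IdealAux

variable {R : Type*} [Ring R]

theorem mk'_eq_zero_iff_tsi (I : TwoSidedIdeal R) (x : R) :
    RingCon.mk' I.ringCon x = 0 ↔ x ∈ I := by
  constructor
  · intro h
    have h' : (x : I.ringCon.Quotient) = ((0 : R) : I.ringCon.Quotient) := h
    exact (TwoSidedIdeal.mem_iff I x).mpr ((RingCon.eq _).mp h')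
  · intro h
    have h' : (x : I.ringCon.Quotient) = ((0 : R) : I.ringCon.Quotient) :=
      (RingCon.eq _).mpr ((TwoSidedIdeal.mem_iff I x).mp h)
    exact h'

theorem mk'_surjective_ringCon (c : RingCon R) :
    Function.Surjective (RingCon.mk' c) := fun y =>
  Quotient.inductionOn' y fun x => ⟨x, rfl⟩

variable {D A : Type*} [CommRing D] [Ring A] [Algebra D A]

theorem mem_dIdeal_iff (d : D) (x : A) : x ∈ dIdeal D A d ↔ ∃ b : A, x = d • b := by
  constructor
  · intro hx
    have h0 : (0 : A) ∈ {x : A | ∃ b : A, x = d • b} := ⟨0, (smul_zero d).symm⟩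
    have hadd : ∀ {x y : A}, x ∈ {x : A | ∃ b : A, x = d • b} →
        y ∈ {x : A | ∃ b : A, x = d • b} → x + y ∈ {x : A | ∃ b : A, x = d • b} := by
      rintro _ _ ⟨b₁, rfl⟩ ⟨b₂, rfl⟩
      exact ⟨b₁ + b₂, (smul_add d b₁ b₂).symm⟩
    have hneg : ∀ {x : A}, x ∈ {x : A | ∃ b : A, x = d • b} →
        -x ∈ {x : A | ∃ b : A, x = d • b} := by
      rintro _ ⟨b, rfl⟩
      exact ⟨-b, (smul_neg d b).symm⟩
    have hml : ∀ {x y : A}, y ∈ {x : A | ∃ b : A, x = d • b} →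
        x * y ∈ {x : A | ∃ b : A, x = d • b} := by
      rintro x _ ⟨b, rfl⟩
      exact ⟨x * b, mul_smul_comm d x b⟩
    have hmr : ∀ {x y : A}, x ∈ {x : A | ∃ b : A, x = d • b} →
        x * y ∈ {x : A | ∃ b : A, x = d • b} := by
      rintro _ y ⟨b, rfl⟩
      exact ⟨b * y, smul_mul_assoc d b y⟩
    have := TwoSidedIdeal.mem_span_iff.mp hx
      (TwoSidedIdeal.mk' {x : A | ∃ b : A, x = d • b} h0 hadd hneg hml hmr)
      (by rintro _ ⟨a, rfl⟩
          simp only [SetLike.mem_coe, TwoSidedIdeal.mem_mk']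
          exact ⟨a, rfl⟩)
    rwa [TwoSidedIdeal.mem_mk'] at this
  · rintro ⟨b, rfl⟩
    exact TwoSidedIdeal.subset_span ⟨b, rfl⟩

end IdealAux

section TensorAux

variable {D : Type*} [CommRing D] [IsDomain D]
variable {K : Type*} [Field K] [Algebra D K] [IsFractionRing D K]
variable {A : Type*} [Ring A] [Algebra D A]

theorem iota_smul (d : D) (a : A) :
    (Algebra.TensorProduct.includeLeftRingHom (R := D) (A := A) (B := K)) (d • a)
      = d • (Algebra.TensorProduct.includeLeftRingHom (R := D) (A := A) (B := K)) a := by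
  simp only [Algebra.TensorProduct.includeLeftRingHom_apply, TensorProduct.smul_tmul']

theorem iota_injective [NoZeroSMulDivisors D A] :
    Function.Injective
      (Algebra.TensorProduct.includeLeftRingHom (R := D) (A := A) (B := K)) := by
  haveI hbc : IsLocalizedModule (nonZeroDivisors D) (TensorProduct.mk D K A 1) :=
    (isLocalizedModule_iff_isBaseChange (nonZeroDivisors D) K _).mpr
      (TensorProduct.isBaseChange D A K)
  intro x y hxy
  rw [← sub_eq_zero]
  have h0 : ((x - y) ⊗ₜ[D] (1 : K) : A ⊗[D] K) = 0 := by
    have h1 : (Algebra.TensorProduct.includeLeftRingHom (R := D) (A := A) (B := K)) (x - y)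
        = 0 := by rw [map_sub, hxy, sub_self]
    simpa [Algebra.TensorProduct.includeLeftRingHom_apply] using h1
  have h1 : (TensorProduct.mk D K A 1) (x - y) = 0 := by
    have h2 := congrArg (TensorProduct.comm D A K) h0
    rw [TensorProduct.comm_tmul, map_zero] at h2
    rw [TensorProduct.mk_apply]
    exact h2
  obtain ⟨s, hs⟩ := (IsLocalizedModule.eq_zero_iff (nonZeroDivisors D)
    (TensorProduct.mk D K A 1)).mp h1
  rw [Submonoid.smul_def] at hs
  exact (smul_eq_zero.mp hs).resolve_left (nonZeroDivisors.coe_ne_zero s)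

theorem smul_cancel_tensor (d : D) (hd : d ≠ 0) {x y : A ⊗[D] K}
    (h : d • x = d • y) : x = y := by
  have hc : algebraMap D K d ≠ 0 := fun hc =>
    hd (IsFractionRing.injective D K (by rw [hc, map_zero]))
  have hv : ((1 : A) ⊗ₜ[D] (algebraMap D K d)⁻¹) * algebraMap D (A ⊗[D] K) d = 1 := by
    rw [Algebra.TensorProduct.algebraMap_apply', Algebra.TensorProduct.tmul_mul_tmul,
      one_mul, inv_mul_cancel₀ hc, ← Algebra.TensorProduct.one_def]
  calc x = (((1 : A) ⊗ₜ[D] (algebraMap D K d)⁻¹) * algebraMap D (A ⊗[D] K) d) * x := by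
        rw [hv, one_mul]
    _ = ((1 : A) ⊗ₜ[D] (algebraMap D K d)⁻¹) * (d • x) := by
        rw [mul_assoc, ← Algebra.smul_def]
    _ = ((1 : A) ⊗ₜ[D] (algebraMap D K d)⁻¹) * (d • y) := by rw [h]
    _ = y := by rw [Algebra.smul_def, ← mul_assoc, hv, one_mul]

theorem exists_inv_tensor (d : D) (hd : d ≠ 0) :
    ∃ u : A ⊗[D] K,
      u * algebraMap D (A ⊗[D] K) d = 1 ∧ algebraMap D (A ⊗[D] K) d * u = 1 ∧
      ∀ b : A, u * (Algebra.TensorProduct.includeLeftRingHom (R := D) (A := A) (B := K)) (d • b)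
        = (Algebra.TensorProduct.includeLeftRingHom (R := D) (A := A) (B := K)) b := by
  have hc : algebraMap D K d ≠ 0 := fun hc =>
    hd (IsFractionRing.injective D K (by rw [hc, map_zero]))
  refine ⟨(1 : A) ⊗ₜ[D] (algebraMap D K d)⁻¹, ?_, ?_, ?_⟩
  · rw [Algebra.TensorProduct.algebraMap_apply', Algebra.TensorProduct.tmul_mul_tmul,
      one_mul, inv_mul_cancel₀ hc, ← Algebra.TensorProduct.one_def]
  · rw [Algebra.TensorProduct.algebraMap_apply', Algebra.TensorProduct.tmul_mul_tmul,
      one_mul, mul_inv_cancel₀ hc, ← Algebra.TensorProduct.one_def]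
  · intro b
    rw [iota_smul, mul_smul_comm, Algebra.smul_def, ← mul_assoc,
      Algebra.TensorProduct.algebraMap_apply', Algebra.TensorProduct.tmul_mul_tmul,
      one_mul, mul_inv_cancel₀ hc, ← Algebra.TensorProduct.one_def, one_mul]

theorem key_forward [NoZeroSMulDivisors D A] (d : D) {u : A ⊗[D] K}
    (hu2 : algebraMap D (A ⊗[D] K) d * u = 1) {w : A}
    (h : ∃ b : A, (Algebra.TensorProduct.includeLeftRingHom (R := D) (A := A) (B := K)) b
      = u * (Algebra.TensorProduct.includeLeftRingHom (R := D) (A := A) (B := K)) w) :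
    ∃ b : A, w = d • b := by
  obtain ⟨b, hb⟩ := h
  refine ⟨b, iota_injective (D := D) (K := K) ?_⟩
  calc (Algebra.TensorProduct.includeLeftRingHom (R := D) (A := A) (B := K)) w
      = (algebraMap D (A ⊗[D] K) d * u) *
          (Algebra.TensorProduct.includeLeftRingHom (R := D) (A := A) (B := K)) w := by
        rw [hu2, one_mul]
    _ = algebraMap D (A ⊗[D] K) d *
          (u * (Algebra.TensorProduct.includeLeftRingHom (R := D) (A := A) (B := K)) w) :=
        mul_assoc _ _ _
    _ = algebraMap D (A ⊗[D] K) d *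
          (Algebra.TensorProduct.includeLeftRingHom (R := D) (A := A) (B := K)) b := by
        rw [← hb]
    _ = (Algebra.TensorProduct.includeLeftRingHom (R := D) (A := A) (B := K)) (d • b) := by
        rw [iota_smul, Algebra.smul_def]

theorem exists_denom_elt (b : A ⊗[D] K) :
    ∃ d : D, d ≠ 0 ∧ ∃ a : A, d • b = a ⊗ₜ[D] (1 : K) := by
  induction b using TensorProduct.induction_on with
  | zero => exact ⟨1, one_ne_zero, 0, by simp⟩
  | tmul a k =>
    obtain ⟨⟨r, c⟩, hrc⟩ := IsLocalization.surj (nonZeroDivisors D) k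
    refine ⟨c, nonZeroDivisors.coe_ne_zero c, r • a, ?_⟩
    have hk : (c : D) • k = algebraMap D K r := by
      rw [Algebra.smul_def, mul_comm]
      exact hrc
    rw [← TensorProduct.tmul_smul, hk, Algebra.algebraMap_eq_smul_one,
      ← TensorProduct.smul_tmul]
  | add x y hx hy =>
    obtain ⟨d₁, h1, a₁, ha₁⟩ := hx
    obtain ⟨d₂, h2, a₂, ha₂⟩ := hy
    refine ⟨d₁ * d₂, mul_ne_zero h1 h2, d₂ • a₁ + d₁ • a₂, ?_⟩
    have e1 : (d₁ * d₂) • x = (d₂ • a₁) ⊗ₜ[D] (1 : K) := by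
      rw [mul_comm d₁ d₂, mul_smul, ha₁, TensorProduct.smul_tmul']
    have e2 : (d₁ * d₂) • y = (d₁ • a₂) ⊗ₜ[D] (1 : K) := by
      rw [mul_smul, ha₂, TensorProduct.smul_tmul']
    rw [smul_add, e1, e2, ← TensorProduct.add_tmul]

theorem exists_denom_poly (F : (A ⊗[D] K)[X]) :
    ∃ d : D, d ≠ 0 ∧ ∃ f : A[X],
      f.map (Algebra.TensorProduct.includeLeftRingHom (R := D) (A := A) (B := K)) = d • F := by
  induction F using Polynomial.induction_on' with
  | add p q hp hq =>
    obtain ⟨d₁, h1, f₁, hf₁⟩ := hp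
    obtain ⟨d₂, h2, f₂, hf₂⟩ := hq
    refine ⟨d₁ * d₂, mul_ne_zero h1 h2, d₂ • f₁ + d₁ • f₂, ?_⟩
    rw [Polynomial.map_add, map_smul_poly _ d₂ (fun a => iota_smul d₂ a),
      map_smul_poly _ d₁ (fun a => iota_smul d₁ a), hf₁, hf₂, smul_add,
      ← mul_smul, ← mul_smul, mul_comm d₂ d₁]
  | monomial n b =>
    obtain ⟨d, hd, a, ha⟩ := exists_denom_elt b
    refine ⟨d, hd, monomial n a, ?_⟩
    rw [Polynomial.map_monomial, Polynomial.smul_monomial,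
      Algebra.TensorProduct.includeLeftRingHom_apply, ha]

end TensorAux

/-- Theorem (version of the link theorem): `S ⊆ A` is a right ringset iff, for every
nonzero `d ∈ D`, the image `S + dA` of `S` in the quotient ring `A/dA` is a right
null-ideal set, i.e. `N^r_{A/dA}(S + dA)` is a right ideal of `(A/dA)[x]`. -/
theorem rightRingset_iff_image_rightNullIdealSet
    (D : Type*) [CommRing D] [IsDomain D]
    (K : Type*) [Field K] [Algebra D K] [IsFractionRing D K]
    (A : Type*) [Ring A] [Algebra D A] [Module.Finite D A] [NoZeroSMulDivisors D A]
    (hAK : ∀ b : A ⊗[D] K,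
      b ∈ Set.range (Algebra.TensorProduct.includeLeftRingHom (R := D) (A := A) (B := K)) →
      b ∈ Set.range (Algebra.TensorProduct.includeRight (R := D) (A := A) (B := K)) →
      b ∈ Set.range (algebraMap D (A ⊗[D] K)))
    (S : Set A) :
    (∀ F ∈ IntRight D K A S, ∀ G ∈ IntRight D K A S, F * G ∈ IntRight D K A S) ↔
    (∀ d : D, d ≠ 0 →
      IsRightIdealSet
        {g : ((dIdeal D A d).ringCon.Quotient)[X] |
          ∀ σ ∈ (RingCon.mk' (dIdeal D A d).ringCon) '' S, g.eval σ = 0}) := by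
  constructor
  · -- Forward direction.
    intro hInt d hd
    obtain ⟨u, hu1, hu2, hu3⟩ := exists_inv_tensor (A := A) (K := K) d hd
    refine ⟨fun σ _ => eval_zero,
      fun a ha b hb σ hσ => by rw [eval_add, ha σ hσ, hb σ hσ, add_zero],
      fun a ha σ hσ => by rw [eval_neg, ha σ hσ, neg_zero], ?_⟩
    intro g a ha
    obtain ⟨f, rfl⟩ := Polynomial.map_surjective _
      (mk'_surjective_ringCon (dIdeal D A d).ringCon) a
    obtain ⟨g₀, rfl⟩ := Polynomial.map_surjective _
      (mk'_surjective_ringCon (dIdeal D A d).ringCon) g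
    have hfs : ∀ t ∈ S, ∃ b : A, f.eval t = d • b := by
      intro t ht
      have h1 := ha _ ⟨t, ht, rfl⟩
      rw [eval_map_ringHom] at h1
      exact (mem_dIdeal_iff d _).mp ((mk'_eq_zero_iff_tsi _ _).mp h1)
    have hFmem : (C u * f.map
        (Algebra.TensorProduct.includeLeftRingHom (R := D) (A := A) (B := K)))
        ∈ IntRight D K A S := by
      intro t ht
      obtain ⟨b, hb⟩ := hfs t ht
      refine ⟨b, ?_⟩
      rw [eval_C_mul, eval_map_ringHom, hb, hu3]
    have hGmem : (g₀.map
        (Algebra.TensorProduct.includeLeftRingHom (R := D) (A := A) (B := K)))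
        ∈ IntRight D K A S := fun t ht => ⟨g₀.eval t, (eval_map_ringHom _ _ _).symm⟩
    have hFG := hInt _ hFmem _ hGmem
    rintro σ ⟨s, hs, rfl⟩
    have h2 := hFG s hs
    have hre : (C u * f.map
          (Algebra.TensorProduct.includeLeftRingHom (R := D) (A := A) (B := K)) *
        g₀.map (Algebra.TensorProduct.includeLeftRingHom (R := D) (A := A) (B := K))).eval
          ((Algebra.TensorProduct.includeLeftRingHom (R := D) (A := A) (B := K)) s)
        = u * (Algebra.TensorProduct.includeLeftRingHom (R := D) (A := A) (B := K))
          ((f * g₀).eval s) := by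
      rw [mul_assoc, ← Polynomial.map_mul, eval_C_mul, eval_map_ringHom]
    rw [hre] at h2
    obtain ⟨b, hw⟩ := key_forward d hu2 h2
    rw [← Polynomial.map_mul, eval_map_ringHom, mk'_eq_zero_iff_tsi, mem_dIdeal_iff]
    exact ⟨b, hw⟩
  · -- Backward direction.
    intro hN F hF G hG s hs
    obtain ⟨d₁, hd₁, f₁, hf₁⟩ := exists_denom_poly F
    obtain ⟨d₂, hd₂, g₁, hg₁⟩ := exists_denom_poly G
    have hd : d₁ * d₂ ≠ 0 := mul_ne_zero hd₁ hd₂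
    have hf : (d₂ • f₁).map
        (Algebra.TensorProduct.includeLeftRingHom (R := D) (A := A) (B := K))
        = (d₁ * d₂) • F := by
      rw [map_smul_poly _ d₂ (fun a => iota_smul d₂ a), hf₁, ← mul_smul, mul_comm d₂ d₁]
    have hg : (d₁ • g₁).map
        (Algebra.TensorProduct.includeLeftRingHom (R := D) (A := A) (B := K))
        = (d₁ * d₂) • G := by
      rw [map_smul_poly _ d₁ (fun a => iota_smul d₁ a), hg₁, ← mul_smul]
    obtain ⟨h0N, haddN, hnegN, hmulN⟩ := hN (d₁ * d₂) hd
    have hfval : ∀ t ∈ S, ∃ b : A, (d₂ • f₁).eval t = (d₁ * d₂) • b := by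
      intro t ht
      obtain ⟨b, hb⟩ := hF t ht
      refine ⟨b, iota_injective (D := D) (K := K) ?_⟩
      calc (Algebra.TensorProduct.includeLeftRingHom (R := D) (A := A) (B := K))
            ((d₂ • f₁).eval t)
          = (((d₂ • f₁).map
              (Algebra.TensorProduct.includeLeftRingHom (R := D) (A := A) (B := K))).eval
            ((Algebra.TensorProduct.includeLeftRingHom (R := D) (A := A) (B := K)) t)) :=
            (eval_map_ringHom _ _ _).symm
        _ = ((d₁ * d₂) • F).eval
            ((Algebra.TensorProduct.includeLeftRingHom (R := D) (A := A) (B := K)) t) := by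
            rw [hf]
        _ = (d₁ * d₂) • F.eval
            ((Algebra.TensorProduct.includeLeftRingHom (R := D) (A := A) (B := K)) t) := by
            rw [eval_smul]
        _ = (d₁ * d₂) •
            (Algebra.TensorProduct.includeLeftRingHom (R := D) (A := A) (B := K)) b := by
            rw [← hb]
        _ = (Algebra.TensorProduct.includeLeftRingHom (R := D) (A := A) (B := K))
            ((d₁ * d₂) • b) := (iota_smul _ _).symm
    have hgval : ∀ t ∈ S, ∃ b : A, (d₁ • g₁).eval t = (d₁ * d₂) • b := by
      intro t ht
      obtain ⟨b, hb⟩ := hG t ht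
      refine ⟨b, iota_injective (D := D) (K := K) ?_⟩
      calc (Algebra.TensorProduct.includeLeftRingHom (R := D) (A := A) (B := K))
            ((d₁ • g₁).eval t)
          = (((d₁ • g₁).map
              (Algebra.TensorProduct.includeLeftRingHom (R := D) (A := A) (B := K))).eval
            ((Algebra.TensorProduct.includeLeftRingHom (R := D) (A := A) (B := K)) t)) :=
            (eval_map_ringHom _ _ _).symm
        _ = ((d₁ * d₂) • G).eval
            ((Algebra.TensorProduct.includeLeftRingHom (R := D) (A := A) (B := K)) t) := by
            rw [hg]
        _ = (d₁ * d₂) • G.eval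
            ((Algebra.TensorProduct.includeLeftRingHom (R := D) (A := A) (B := K)) t) := by
            rw [eval_smul]
        _ = (d₁ * d₂) •
            (Algebra.TensorProduct.includeLeftRingHom (R := D) (A := A) (B := K)) b := by
            rw [← hb]
        _ = (Algebra.TensorProduct.includeLeftRingHom (R := D) (A := A) (B := K))
            ((d₁ * d₂) • b) := (iota_smul _ _).symm
    have hfbar : ∀ σ ∈ (RingCon.mk' (dIdeal D A (d₁ * d₂)).ringCon) '' S,
        ((d₂ • f₁).map (RingCon.mk' (dIdeal D A (d₁ * d₂)).ringCon)).eval σ = 0 := by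
      rintro σ ⟨t, ht, rfl⟩
      rw [eval_map_ringHom, mk'_eq_zero_iff_tsi, mem_dIdeal_iff]
      exact hfval t ht
    obtain ⟨c, hc⟩ := hgval s hs
    have hkey := hmulN (C (RingCon.mk' (dIdeal D A (d₁ * d₂)).ringCon c)) _ hfbar
      (RingCon.mk' (dIdeal D A (d₁ * d₂)).ringCon s) ⟨s, hs, rfl⟩
    have hkey2 : ∃ e : A, ((d₂ • f₁) * C c).eval s = (d₁ * d₂) • e := by
      rw [← mem_dIdeal_iff (d₁ * d₂), ← mk'_eq_zero_iff_tsi, ← eval_map_ringHom,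
        Polynomial.map_mul, Polynomial.map_C]
      exact hkey
    obtain ⟨e, he⟩ := hkey2
    have hprod : ((d₂ • f₁) * (d₁ • g₁)).eval s = ((d₁ * d₂) * (d₁ * d₂)) • e := by
      rw [eval_mul_eq_eval_mul_C, hc, ← Polynomial.smul_C, mul_smul_comm, eval_smul, he,
        ← mul_smul]
    refine ⟨e, smul_cancel_tensor ((d₁ * d₂) * (d₁ * d₂)) (mul_ne_zero hd hd) ?_⟩
    calc ((d₁ * d₂) * (d₁ * d₂)) •
          (Algebra.TensorProduct.includeLeftRingHom (R := D) (A := A) (B := K)) e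
        = (Algebra.TensorProduct.includeLeftRingHom (R := D) (A := A) (B := K))
            (((d₁ * d₂) * (d₁ * d₂)) • e) := (iota_smul _ _).symm
      _ = (Algebra.TensorProduct.includeLeftRingHom (R := D) (A := A) (B := K))
            (((d₂ • f₁) * (d₁ • g₁)).eval s) := by rw [hprod]
      _ = (((d₂ • f₁) * (d₁ • g₁)).map
            (Algebra.TensorProduct.includeLeftRingHom (R := D) (A := A) (B := K))).eval
            ((Algebra.TensorProduct.includeLeftRingHom (R := D) (A := A) (B := K)) s) :=
          (eval_map_ringHom _ _ _).symm
      _ = (((d₁ * d₂) • F) * ((d₁ * d₂) • G)).eval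
            ((Algebra.TensorProduct.includeLeftRingHom (R := D) (A := A) (B := K)) s) := by
          rw [Polynomial.map_mul, hf, hg]
      _ = (((d₁ * d₂) * (d₁ * d₂)) • (F * G)).eval
            ((Algebra.TensorProduct.includeLeftRingHom (R := D) (A := A) (B := K)) s) := by
          rw [smul_mul_assoc, mul_smul_comm, ← mul_smul]
      _ = ((d₁ * d₂) * (d₁ * d₂)) • (F * G).eval
            ((Algebra.TensorProduct.includeLeftRingHom (R := D) (A := A) (B := K)) s) := by
          rw [eval_smul]
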